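/- Assume Σ_ℓ(0) is integral, and fix α ∈ Σ_ℓ and u ∈ X^∨. Let K ⊆ ℝ × X_ℝ be the convex cone generated by (1, 0) together with all elements (E_ℓ(v) + v(γ) − E_ℓ(u) − u(α), γ − α + 2ℓφ(v − u)) with γ ∈ Σ_ℓ and v ∈ X^∨. Then: (1) (x₀, x) ∈ K if and only if there exists β ∈ Σ_ℓ^α with x ∈ Cone(C_ℓ^β) and x₀ ≥ v_β(x) + u(x); (2) every (x₀, x) ∈ K satisfies x₀ ≥ u(x), with equality if and only if x ∈ Cone(C_ℓ^α) and x₀ = u(x). -/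

import Mathlib

open scoped BigOperators Pointwise

namespace NFC

/-- The coordinatewise embedding of the lattice `X = ℤ^g` into `X_ℝ = ℝ^g`. -/
def iota {g : ℕ} (x : Fin g → ℤ) : Fin g → ℝ := fun i => (x i : ℝ)

/-- The ℝ-linear extension of an integral linear functional `u ∈ X^∨` to `X_ℝ`. -/
noncomputable def extd {g : ℕ} (u : (Fin g → ℤ) →ₗ[ℤ] ℤ) (x : Fin g → ℝ) : ℝ :=
  ∑ i, (u (Pi.single i 1) : ℝ) * x i

/-- `E_ℓ(u) = ℓ · u(φ(u))`. -/
def El {g : ℕ} {Y : Submodule ℤ (Fin g → ℤ)}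
    (φ : ((Fin g → ℤ) →ₗ[ℤ] ℤ) → Y) (ℓ : ℕ) (u : (Fin g → ℤ) →ₗ[ℤ] ℤ) : ℤ :=
  (ℓ : ℤ) * u (φ u : Fin g → ℤ)

/-- `Σ_ℓ = {α ∈ X : E_ℓ(u) + u(α) ≥ 0 for all u ∈ X^∨}`. -/
def SigmaL {g : ℕ} {Y : Submodule ℤ (Fin g → ℤ)}
    (φ : ((Fin g → ℤ) →ₗ[ℤ] ℤ) → Y) (ℓ : ℕ) : Set (Fin g → ℤ) :=
  {α | ∀ u : (Fin g → ℤ) →ₗ[ℤ] ℤ, 0 ≤ El φ ℓ u + u α}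

/-- The Voronoi polytope `Σ_ℓ(c)`, defined w.r.t. the norm `‖z‖ = √(B̄(z,z))`. -/
noncomputable def VorP {g : ℕ} {Y : Submodule ℤ (Fin g → ℤ)}
    (Bb : (Fin g → ℝ) →ₗ[ℝ] (Fin g → ℝ) →ₗ[ℝ] ℝ)
    (φ : ((Fin g → ℤ) →ₗ[ℤ] ℤ) → Y) (ℓ : ℕ)
    (c : (Fin g → ℤ) →ₗ[ℤ] ℤ) : Set (Fin g → ℝ) :=
  {x | ∀ u : (Fin g → ℤ) →ₗ[ℤ] ℤ,
    Real.sqrt (Bb (x - iota ((2 * (ℓ : ℤ)) • ((φ c : Fin g → ℤ))))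
               (x - iota ((2 * (ℓ : ℤ)) • ((φ c : Fin g → ℤ))))) ≤
    Real.sqrt (Bb (x - iota ((2 * (ℓ : ℤ)) • ((φ u : Fin g → ℤ))))
               (x - iota ((2 * (ℓ : ℤ)) • ((φ u : Fin g → ℤ)))))}

/-- A subset `Δ ⊆ X_ℝ` is integral: a bounded convex polytope equal to the convex hull
of `Δ ∩ X`, symmetric about `0`, containing `0`, with `Δ ∩ X` containing a ℤ-basis. -/
def IsIntegral {g : ℕ} (Δ : Set (Fin g → ℝ)) : Prop :=
  Bornology.IsBounded Δ ∧
  Δ = convexHull ℝ (Δ ∩ Set.range (iota (g := g))) ∧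
  Δ = -Δ ∧ (0 : Fin g → ℝ) ∈ Δ ∧
  ∃ b : Module.Basis (Fin g) ℤ (Fin g → ℤ), ∀ i, iota (b i) ∈ Δ

/-- `Σ_ℓ^α = (α + 2ℓφ(X^∨)) ∩ Σ_ℓ`. -/
def SigmaAlpha {g : ℕ} {Y : Submodule ℤ (Fin g → ℤ)}
    (φ : ((Fin g → ℤ) →ₗ[ℤ] ℤ) → Y) (ℓ : ℕ) (α : Fin g → ℤ) : Set (Fin g → ℤ) :=
  {β | β ∈ SigmaL φ ℓ ∧ ∃ u : (Fin g → ℤ) →ₗ[ℤ] ℤ, β = α + (2 * (ℓ : ℤ)) • ((φ u : Fin g → ℤ))}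

/-- The convex cone generated by a set `S` (the set of all nonnegative combinations). -/
def conicHull {M : Type*} [AddCommMonoid M] [Module ℝ M] (S : Set M) : Set M :=
  {y | ∃ (n : ℕ) (c : Fin n → ℝ) (v : Fin n → M),
    (∀ i, 0 ≤ c i) ∧ (∀ i, v i ∈ S) ∧ y = ∑ i, c i • v i}

/-- `Cone(C_ℓ^β)`: the convex cone in `X_ℝ` generated by `{γ − β : γ ∈ Σ_ℓ}`. -/
def coneC {g : ℕ} {Y : Submodule ℤ (Fin g → ℤ)}
    (φ : ((Fin g → ℤ) →ₗ[ℤ] ℤ) → Y) (ℓ : ℕ) (β : Fin g → ℤ) : Set (Fin g → ℝ) :=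
  conicHull {w | ∃ γ ∈ SigmaL φ ℓ, w = iota (γ - β)}

section Aux
variable {g : ℕ} {Y : Submodule ℤ (Fin g → ℤ)}

lemma iota_sub (a b : Fin g → ℤ) : iota (a - b) = iota a - iota b := by
  funext i; simp [iota]

lemma iota_add (a b : Fin g → ℤ) : iota (a + b) = iota a + iota b := by
  funext i; simp [iota]

lemma iota_single (i : Fin g) : iota (Pi.single i (1:ℤ)) = Pi.single i (1:ℝ) := by
  funext j; by_cases h : j = i <;> simp [iota, Pi.single_apply, h]

lemma apply_eq_sum (w : (Fin g → ℤ) →ₗ[ℤ] ℤ) (ξ : Fin g → ℤ) :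
    w ξ = ∑ i, ξ i * w (Pi.single i 1) := by
  have h : ξ = ∑ i, ξ i • Pi.single i (1:ℤ) := by
    conv_lhs => rw [← Finset.univ_sum_single ξ]
    refine Finset.sum_congr rfl fun i _ => ?_
    funext j; by_cases h : j = i <;> simp [Pi.single_apply, h]
  conv_lhs => rw [h]
  rw [map_sum]
  simp_rw [map_smul, smul_eq_mul]

lemma extd_iota (w : (Fin g → ℤ) →ₗ[ℤ] ℤ) (ξ : Fin g → ℤ) :
    extd w (iota ξ) = (w ξ : ℝ) := by
  rw [apply_eq_sum w ξ, extd]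
  push_cast
  refine Finset.sum_congr rfl fun i _ => ?_
  simp [iota, mul_comm]

/-- `extd w` as a linear map. -/
noncomputable def extdL (w : (Fin g → ℤ) →ₗ[ℤ] ℤ) : (Fin g → ℝ) →ₗ[ℝ] ℝ where
  toFun := extd w
  map_add' x y := by simp [extd, mul_add, Finset.sum_add_distrib]
  map_smul' c x := by
    simp only [extd, Pi.smul_apply, smul_eq_mul, RingHom.id_apply, Finset.mul_sum]
    exact Finset.sum_congr rfl fun i _ => by ring

lemma extd_eq_extdL (w : (Fin g → ℤ) →ₗ[ℤ] ℤ) (x : Fin g → ℝ) : extd w x = extdL w x := rfl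

lemma extd_addfun (v w : (Fin g → ℤ) →ₗ[ℤ] ℤ) (x : Fin g → ℝ) :
    extd (v + w) x = extd v x + extd w x := by
  simp [extd, add_mul, Finset.sum_add_distrib]

end Aux
set_option linter.unusedSectionVars false
section Phi
variable {g : ℕ} {Y : Submodule ℤ (Fin g → ℤ)}
variable {B : Y →ₗ[ℤ] (Fin g → ℤ) →ₗ[ℤ] ℤ} {N : ℕ}
variable {φ : ((Fin g → ℤ) →ₗ[ℤ] ℤ) → Y}

lemma B_inj (hBpos : ∀ y : Y, y ≠ 0 → 0 < B y (y : Fin g → ℤ)) {y z : Y}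
    (h : B y = B z) : y = z := by
  by_contra hne
  have hd : y - z ≠ 0 := sub_ne_zero.mpr hne
  have := hBpos (y - z) hd
  rw [map_sub, LinearMap.sub_apply] at this
  have h2 : B y ((y - z : Y) : Fin g → ℤ) = B z ((y - z : Y) : Fin g → ℤ) := by rw [h]
  omega

variable (hBpos : ∀ y : Y, y ≠ 0 → 0 < B y (y : Fin g → ℤ))
  (hNpos : 0 < N) (hφ : ∀ u : (Fin g → ℤ) →ₗ[ℤ] ℤ, B (φ u) = (N : ℤ) • u)

include hBpos hNpos hφ

lemma phi_add (u v : (Fin g → ℤ) →ₗ[ℤ] ℤ) : φ (u + v) = φ u + φ v := by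
  refine B_inj hBpos ?_
  rw [map_add, hφ, hφ, hφ, smul_add]

lemma phi_zero : φ 0 = 0 := by
  refine B_inj hBpos ?_
  rw [hφ, map_zero, smul_zero]

lemma phi_neg (u : (Fin g → ℤ) →ₗ[ℤ] ℤ) : φ (-u) = -φ u := by
  refine B_inj hBpos ?_
  rw [map_neg, hφ, hφ, smul_neg]

lemma phi_sub (u v : (Fin g → ℤ) →ₗ[ℤ] ℤ) : φ (u - v) = φ u - φ v := by
  refine B_inj hBpos ?_
  rw [map_sub, hφ, hφ, hφ, smul_sub]

lemma phi_inj {u v : (Fin g → ℤ) →ₗ[ℤ] ℤ} (h : φ u = φ v) : u = v := by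
  have h2 : (N : ℤ) • u = (N : ℤ) • v := by rw [← hφ u, ← hφ v, h]
  have hN : (N : ℤ) ≠ 0 := by exact_mod_cast hNpos.ne'
  exact smul_right_injective _ hN h2

lemma pair_symm (hBsymm : ∀ y z : Y, B y (z : Fin g → ℤ) = B z (y : Fin g → ℤ))
    (u v : (Fin g → ℤ) →ₗ[ℤ] ℤ) : u ((φ v : Y) : Fin g → ℤ) = v ((φ u : Y) : Fin g → ℤ) := by
  have h1 : B (φ u) ((φ v : Y) : Fin g → ℤ) = (N : ℤ) * u ((φ v : Y) : Fin g → ℤ) := by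
    rw [hφ]; simp
  have h2 : B (φ v) ((φ u : Y) : Fin g → ℤ) = (N : ℤ) * v ((φ u : Y) : Fin g → ℤ) := by
    rw [hφ]; simp
  have h3 := hBsymm (φ u) (φ v)
  have hN : (N : ℤ) ≠ 0 := by exact_mod_cast hNpos.ne'
  have := h1.symm.trans (h3.trans h2)
  exact mul_left_cancel₀ hN this

end Phi
section Key
set_option linter.unusedSectionVars false
variable {g : ℕ} {Y : Submodule ℤ (Fin g → ℤ)}
variable {B : Y →ₗ[ℤ] (Fin g → ℤ) →ₗ[ℤ] ℤ} {N : ℕ}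
variable {φ : ((Fin g → ℤ) →ₗ[ℤ] ℤ) → Y}
variable (hBsymm : ∀ y z : Y, B y (z : Fin g → ℤ) = B z (y : Fin g → ℤ))
  (hBpos : ∀ y : Y, y ≠ 0 → 0 < B y (y : Fin g → ℤ))
  (hNpos : 0 < N) (hφ : ∀ u : (Fin g → ℤ) →ₗ[ℤ] ℤ, B (φ u) = (N : ℤ) • u)
include hBsymm hBpos hNpos hφ

lemma key_identity (ℓ : ℕ) (w v u' : (Fin g → ℤ) →ₗ[ℤ] ℤ) (γ α : Fin g → ℤ) :
    (El φ ℓ v + v γ - El φ ℓ u' - u' α)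
      - w (γ - α + (2 * (ℓ : ℤ)) • ((φ (v - u') : Y) : Fin g → ℤ))
    = (El φ ℓ (v - w) + (v - w) γ) - (El φ ℓ (u' - w) + (u' - w) α) := by
  have hs1 := pair_symm hBpos hNpos hφ hBsymm v w
  have hs2 := pair_symm hBpos hNpos hφ hBsymm u' w
  simp only [El, phi_sub hBpos hNpos hφ, AddSubgroupClass.coe_sub, map_sub, map_add,
    map_smul, LinearMap.sub_apply, smul_eq_mul]
  push_cast
  linear_combination (ℓ : ℤ) * hs1 - (ℓ : ℤ) * hs2

lemma El_neg (ℓ : ℕ) (v : (Fin g → ℤ) →ₗ[ℤ] ℤ) : El φ ℓ (-v) = El φ ℓ v := by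
  simp only [El, phi_neg hBpos hNpos hφ, NegMemClass.coe_neg, map_neg, LinearMap.neg_apply,
    neg_neg]

/-- If `α ∈ Σ_ℓ` and `β = α − 2ℓφ(vβ) ∈ Σ_ℓ` then `E_ℓ(vβ) = vβ(α)`. -/
lemma sigma_eq (ℓ : ℕ) (α : Fin g → ℤ) (vβ : (Fin g → ℤ) →ₗ[ℤ] ℤ)
    (hα : α ∈ SigmaL φ ℓ) (hβ : α - (2 * (ℓ:ℤ)) • ((φ vβ : Y) : Fin g → ℤ) ∈ SigmaL φ ℓ) :
    El φ ℓ vβ - vβ α = 0 := by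
  have h1 := hβ vβ
  have h2 := hα (-vβ)
  rw [El_neg hBsymm hBpos hNpos hφ, LinearMap.neg_apply] at h2
  rw [map_sub, map_smul, smul_eq_mul] at h1
  simp only [El] at h1 h2 ⊢
  have e1 : (2 * (ℓ:ℤ)) * vβ ((φ vβ : Y) : Fin g → ℤ)
      = 2 * ((ℓ:ℤ) * vβ ((φ vβ : Y) : Fin g → ℤ)) := by ring
  rw [e1] at h1
  linarith [h1, h2]

/-- The per-generator inequality: if `α, α − 2ℓφ(vβ) ∈ Σ_ℓ` and `γ ∈ Σ_ℓ`, then for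
`w = u + vβ` the generator pairs `(a, b)` of `K` satisfy `w(b) ≤ a`. -/
lemma gen_ineq (ℓ : ℕ) (α γ : Fin g → ℤ) (u vβ v : (Fin g → ℤ) →ₗ[ℤ] ℤ)
    (hα : α ∈ SigmaL φ ℓ) (hβ : α - (2 * (ℓ:ℤ)) • ((φ vβ : Y) : Fin g → ℤ) ∈ SigmaL φ ℓ)
    (hγ : γ ∈ SigmaL φ ℓ) :
    (u + vβ) (γ - α + (2 * (ℓ : ℤ)) • ((φ (v - u) : Y) : Fin g → ℤ))
      ≤ El φ ℓ v + v γ - El φ ℓ u - u α := by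
  have hk := key_identity hBsymm hBpos hNpos hφ ℓ (u + vβ) v u γ α
  have h0 : El φ ℓ (u - (u + vβ)) + (u - (u + vβ)) α = 0 := by
    have : u - (u + vβ) = -vβ := by abel
    rw [this, El_neg hBsymm hBpos hNpos hφ, LinearMap.neg_apply]
    have := sigma_eq hBsymm hBpos hNpos hφ ℓ α vβ hα hβ
    omega
  have h1 : 0 ≤ El φ ℓ (v - (u + vβ)) + (v - (u + vβ)) γ := hγ _
  omega

/-- Equality version used in the reverse inclusion: with `v = w = u + vβ`. -/
lemma gen_eq (ℓ : ℕ) (α γ : Fin g → ℤ) (u vβ : (Fin g → ℤ) →ₗ[ℤ] ℤ)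
    (hα : α ∈ SigmaL φ ℓ) (hβ : α - (2 * (ℓ:ℤ)) • ((φ vβ : Y) : Fin g → ℤ) ∈ SigmaL φ ℓ) :
    (u + vβ) (γ - α + (2 * (ℓ : ℤ)) • ((φ (u + vβ - u) : Y) : Fin g → ℤ))
      = El φ ℓ (u + vβ) + (u + vβ) γ - El φ ℓ u - u α := by
  have hk := key_identity hBsymm hBpos hNpos hφ ℓ (u + vβ) (u + vβ) u γ α
  have h0 : El φ ℓ (u - (u + vβ)) + (u - (u + vβ)) α = 0 := by
    have : u - (u + vβ) = -vβ := by abel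
    rw [this, El_neg hBsymm hBpos hNpos hφ, LinearMap.neg_apply]
    have := sigma_eq hBsymm hBpos hNpos hφ ℓ α vβ hα hβ
    omega
  have h1 : El φ ℓ (u + vβ - (u + vβ)) + (u + vβ - (u + vβ)) γ = 0 := by
    simp only [sub_self, El, phi_zero hBpos hNpos hφ, LinearMap.zero_apply, mul_zero, add_zero]
  omega

/-- If `γ ∈ Σ_ℓ` and `E_ℓ(s) + s(γ) = 0` then `γ + 2ℓφ(s) ∈ Σ_ℓ`. -/
lemma shift_mem_sigma (ℓ : ℕ) (γ : Fin g → ℤ) (s : (Fin g → ℤ) →ₗ[ℤ] ℤ)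
    (hγ : γ ∈ SigmaL φ ℓ) (hs : El φ ℓ s + s γ = 0) :
    γ + (2 * (ℓ:ℤ)) • ((φ s : Y) : Fin g → ℤ) ∈ SigmaL φ ℓ := by
  intro t
  have key : El φ ℓ (t + s) + (t + s) γ
      = (El φ ℓ t + t (γ + (2 * (ℓ:ℤ)) • ((φ s : Y) : Fin g → ℤ))) + (El φ ℓ s + s γ) := by
    have hs1 := pair_symm hBpos hNpos hφ hBsymm t s
    simp only [El, phi_add hBpos hNpos hφ, Submodule.coe_add, map_add, map_smul,
      LinearMap.add_apply, smul_eq_mul]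
    linear_combination (-1) * (ℓ : ℤ) * hs1
  have h1 : 0 ≤ El φ ℓ (t + s) + (t + s) γ := hγ _
  omega

end Key
section Cone
set_option linter.unusedSectionVars false
set_option maxHeartbeats 1000000
variable {g : ℕ} {Y : Submodule ℤ (Fin g → ℤ)}
variable {B : Y →ₗ[ℤ] (Fin g → ℤ) →ₗ[ℤ] ℤ} {N : ℕ}
variable {φ : ((Fin g → ℤ) →ₗ[ℤ] ℤ) → Y}
variable (hBsymm : ∀ y z : Y, B y (z : Fin g → ℤ) = B z (y : Fin g → ℤ))
  (hBpos : ∀ y : Y, y ≠ 0 → 0 < B y (y : Fin g → ℤ))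
  (hNpos : 0 < N) (hφ : ∀ u : (Fin g → ℤ) →ₗ[ℤ] ℤ, B (φ u) = (N : ℤ) • u)

/-- The generating set of the cone `K`. -/
def Kgen (φ : ((Fin g → ℤ) →ₗ[ℤ] ℤ) → Y) (ℓ : ℕ) (α : Fin g → ℤ)
    (u : (Fin g → ℤ) →ₗ[ℤ] ℤ) : Set (ℝ × (Fin g → ℝ)) :=
  insert ((1 : ℝ), (0 : Fin g → ℝ))
      {p : ℝ × (Fin g → ℝ) | ∃ γ ∈ SigmaL φ ℓ, ∃ v : (Fin g → ℤ) →ₗ[ℤ] ℤ,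
        p = (((El φ ℓ v + v γ - El φ ℓ u - u α : ℤ) : ℝ),
             iota (γ - α + (2 * (ℓ : ℤ)) • ((φ (v - u) : Fin g → ℤ))))}

include hBsymm hBpos hNpos hφ

lemma K_bound (ℓ : ℕ) (α : Fin g → ℤ) (u vβ : (Fin g → ℤ) →ₗ[ℤ] ℤ)
    (hα : α ∈ SigmaL φ ℓ) (hβ : α - (2 * (ℓ:ℤ)) • ((φ vβ : Y) : Fin g → ℤ) ∈ SigmaL φ ℓ)
    {x₀ : ℝ} {x : Fin g → ℝ} (hx : (x₀, x) ∈ conicHull (Kgen φ ℓ α u)) :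
    extd (u + vβ) x ≤ x₀ := by
  obtain ⟨n, c, p, hc, hp, hsum⟩ := hx
  have h1 : x₀ = ∑ i, c i * (p i).1 := by
    have := congrArg Prod.fst hsum
    simpa [Prod.fst_sum, smul_eq_mul] using this
  have h2 : x = ∑ i, c i • (p i).2 := by
    have := congrArg Prod.snd hsum
    simpa [Prod.snd_sum] using this
  have hterm : ∀ i, extd (u + vβ) ((p i).2) ≤ (p i).1 := by
    intro i
    rcases hp i with h | ⟨γ, hγ, v, hpe⟩
    · rw [h]
      have : extd (u + vβ) (0 : Fin g → ℝ) = 0 := by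
        rw [extd_eq_extdL, map_zero]
      rw [this]; norm_num
    · rw [hpe]
      simp only
      rw [extd_iota]
      exact_mod_cast gen_ineq hBsymm hBpos hNpos hφ ℓ α γ u vβ v hα hβ hγ
  calc extd (u + vβ) x = ∑ i, c i * extd (u + vβ) ((p i).2) := by
        rw [h2, extd_eq_extdL, map_sum]
        exact Finset.sum_congr rfl fun i _ => by rw [map_smul, smul_eq_mul, ← extd_eq_extdL]
    _ ≤ ∑ i, c i * (p i).1 :=
        Finset.sum_le_sum fun i _ => mul_le_mul_of_nonneg_left (hterm i) (hc i)
    _ = x₀ := h1.symm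

lemma K_eq_case (ℓ : ℕ) (α : Fin g → ℤ) (u : (Fin g → ℤ) →ₗ[ℤ] ℤ)
    (hα : α ∈ SigmaL φ ℓ)
    {x₀ : ℝ} {x : Fin g → ℝ} (hx : (x₀, x) ∈ conicHull (Kgen φ ℓ α u))
    (heq : x₀ = extd u x) : x ∈ coneC φ ℓ α := by
  obtain ⟨n, c, p, hc, hp, hsum⟩ := hx
  have h1 : x₀ = ∑ i, c i * (p i).1 := by
    have := congrArg Prod.fst hsum; simpa [Prod.fst_sum, smul_eq_mul] using this
  have h2 : x = ∑ i, c i • (p i).2 := by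
    have := congrArg Prod.snd hsum; simpa [Prod.snd_sum] using this
  have hterm : ∀ i, extd u ((p i).2) ≤ (p i).1 := by
    intro i
    rcases hp i with h | ⟨γ, hγ, v, hpe⟩
    · rw [h]
      have : extd u (0 : Fin g → ℝ) = 0 := by rw [extd_eq_extdL, map_zero]
      rw [this]; norm_num
    · rw [hpe]; simp only; rw [extd_iota]
      have h0 : α - (2 * (ℓ:ℤ)) • ((φ (0 : (Fin g → ℤ) →ₗ[ℤ] ℤ) : Y) : Fin g → ℤ)
          ∈ SigmaL φ ℓ := by
        rw [phi_zero hBpos hNpos hφ]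
        simpa using hα
      have := gen_ineq hBsymm hBpos hNpos hφ ℓ α γ u 0 v hα h0 hγ
      rw [add_zero] at this
      exact_mod_cast this
  have hext : extd u x = ∑ i, c i * extd u ((p i).2) := by
    rw [h2, extd_eq_extdL, map_sum]
    exact Finset.sum_congr rfl fun i _ => by rw [map_smul, smul_eq_mul, ← extd_eq_extdL]
  -- each term with positive coefficient achieves equality
  have hzero : ∀ i ∈ Finset.univ, c i * ((p i).1 - extd u ((p i).2)) = 0 := by
    have hsum0 : ∑ i, c i * ((p i).1 - extd u ((p i).2)) = 0 := by
      have : ∑ i, c i * ((p i).1 - extd u ((p i).2))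
          = (∑ i, c i * (p i).1) - ∑ i, c i * extd u ((p i).2) := by
        rw [← Finset.sum_sub_distrib]
        exact Finset.sum_congr rfl fun i _ => by ring
      rw [this, ← h1, ← hext, heq, sub_self]
    refine (Finset.sum_eq_zero_iff_of_nonneg ?_).mp hsum0
    intro i _
    exact mul_nonneg (hc i) (sub_nonneg.mpr (hterm i))
  -- build the new representation
  have hchoice : ∀ i, ∃ z : Fin g → ℝ,
      (∃ γ' ∈ SigmaL φ ℓ, z = iota (γ' - α)) ∧ c i • z = c i • ((p i).2) := by
    intro i
    by_cases hci : c i = 0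
    · exact ⟨iota (α - α), ⟨α, hα, rfl⟩, by rw [hci, zero_smul, zero_smul]⟩
    · have hpi : (p i).1 = extd u ((p i).2) := by
        have := hzero i (Finset.mem_univ i)
        rcases mul_eq_zero.mp this with h | h
        · exact absurd h hci
        · linarith [sub_eq_zero.mp h]
      rcases hp i with h | ⟨γ, hγ, v, hpe⟩
      · exfalso
        rw [h] at hpi
        simp only at hpi
        rw [show extd u (0 : Fin g → ℝ) = 0 from by rw [extd_eq_extdL, map_zero]] at hpi
        norm_num at hpi
      · rw [hpe] at hpi
        simp only at hpi
        rw [extd_iota] at hpi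
        have hint : (El φ ℓ v + v γ - El φ ℓ u - u α : ℤ)
            = u (γ - α + (2 * (ℓ : ℤ)) • ((φ (v - u) : Y) : Fin g → ℤ)) := by
          exact_mod_cast hpi
        have hk := key_identity hBsymm hBpos hNpos hφ ℓ u v u γ α
        have hz : El φ ℓ (v - u) + (v - u) γ = 0 := by
          have h00 : El φ ℓ (u - u) + (u - u) α = 0 := by
            simp [El, sub_self]
          omega
        have hγ' := shift_mem_sigma hBsymm hBpos hNpos hφ ℓ γ (v - u) hγ hz
        refine ⟨(p i).2, ⟨γ + (2 * (ℓ:ℤ)) • ((φ (v - u) : Y) : Fin g → ℤ), hγ', ?_⟩, rfl⟩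
        rw [hpe]
        simp only
        congr 1
        abel
  choose z hzmem hzeq using hchoice
  exact ⟨n, c, z, hc, hzmem, by rw [h2]; exact Finset.sum_congr rfl fun i _ => (hzeq i).symm⟩

lemma K_rev (ℓ : ℕ) (α : Fin g → ℤ) (u vβ : (Fin g → ℤ) →ₗ[ℤ] ℤ) (β : Fin g → ℤ)
    (hα : α ∈ SigmaL φ ℓ) (hbS : β ∈ SigmaL φ ℓ)
    (hβ : β = α - (2 * (ℓ:ℤ)) • ((φ vβ : Y) : Fin g → ℤ))
    {x₀ : ℝ} {x : Fin g → ℝ} (hcone : x ∈ coneC φ ℓ β)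
    (hineq : extd vβ x + extd u x ≤ x₀) :
    (x₀, x) ∈ conicHull (Kgen φ ℓ α u) := by
  obtain ⟨n, c, z, hc, hz, hx⟩ := hcone
  choose γf hγmem hzeq using hz
  set w : (Fin g → ℤ) →ₗ[ℤ] ℤ := u + vβ with hw
  have hbS2 : α - (2 * (ℓ:ℤ)) • ((φ vβ : Y) : Fin g → ℤ) ∈ SigmaL φ ℓ := hβ ▸ hbS
  have hwx : extd w x = extd u x + extd vβ x := extd_addfun u vβ x
  -- vector identity : γ - α + 2ℓφ(w - u) = γ - β
  have hvec : ∀ j, γf j - α + (2 * (ℓ:ℤ)) • ((φ (w - u) : Y) : Fin g → ℤ) = γf j - β := by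
    intro j
    have : w - u = vβ := by rw [hw]; abel
    rw [this, hβ]
    abel
  -- first components
  have hfst : ∀ j, ((El φ ℓ w + w (γf j) - El φ ℓ u - u α : ℤ) : ℝ) = extd w (z j) := by
    intro j
    rw [hzeq j, extd_iota]
    have := gen_eq hBsymm hBpos hNpos hφ ℓ α (γf j) u vβ hα hbS2
    rw [← hw] at this
    have h2 : w (γf j - α + (2 * (ℓ : ℤ)) • ((φ (w - u) : Y) : Fin g → ℤ)) = w (γf j - β) := by
      rw [hvec j]
    exact_mod_cast (h2 ▸ this).symm
  refine ⟨n + 1, Fin.cons (x₀ - extd w x) c,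
    Fin.cons ((1 : ℝ), (0 : Fin g → ℝ))
      (fun j => (((El φ ℓ w + w (γf j) - El φ ℓ u - u α : ℤ) : ℝ), z j)), ?_, ?_, ?_⟩
  · intro i
    refine Fin.cases ?_ ?_ i
    · simp only [Fin.cons_zero]
      linarith [hwx, hineq]
    · intro j; simpa using hc j
  · intro i
    refine Fin.cases ?_ ?_ i
    · exact Set.mem_insert _ _
    · intro j
      refine Set.mem_insert_of_mem _ ⟨γf j, hγmem j, w, ?_⟩
      rw [Fin.cons_succ, hvec j, hzeq j]
  · rw [Fin.sum_univ_succ]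
    simp only [Fin.cons_zero, Fin.cons_succ]
    have hsw : ∑ j : Fin n, c j * ((El φ ℓ w + w (γf j) - El φ ℓ u - u α : ℤ) : ℝ)
        = extd w x := by
      rw [hx, extd_eq_extdL, map_sum]
      refine Finset.sum_congr rfl fun j _ => ?_
      rw [map_smul, smul_eq_mul, ← extd_eq_extdL, hfst j]
    refine Prod.ext ?_ ?_
    · simp only [Prod.fst_add, Prod.smul_fst, Prod.fst_sum, smul_eq_mul]
      rw [hsw]
      ring
    · simp only [Prod.snd_add, Prod.smul_snd, Prod.snd_sum, smul_zero]
      rw [zero_add, hx]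
end Cone
section Analysis
set_option linter.unusedSectionVars false
set_option maxHeartbeats 1000000
variable {g : ℕ} {Y : Submodule ℤ (Fin g → ℤ)}
variable {B : Y →ₗ[ℤ] (Fin g → ℤ) →ₗ[ℤ] ℤ} {N : ℕ}
variable {φ : ((Fin g → ℤ) →ₗ[ℤ] ℤ) → Y}
variable {Bb : (Fin g → ℝ) →ₗ[ℝ] (Fin g → ℝ) →ₗ[ℝ] ℝ}

lemma iota_zsmul (k : ℤ) (ξ : Fin g → ℤ) : iota (k • ξ) = (k : ℝ) • iota ξ := by
  funext i; simp [iota]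

lemma extd_negfun (t : (Fin g → ℤ) →ₗ[ℤ] ℤ) (x : Fin g → ℝ) : extd (-t) x = - extd t x := by
  simp only [extd, LinearMap.neg_apply, Int.cast_neg, neg_mul, ← Finset.sum_neg_distrib]

lemma El_zero (ℓ : ℕ) : El φ ℓ (0 : (Fin g → ℤ) →ₗ[ℤ] ℤ) = 0 := by simp [El]

lemma extd_zerofun (x : Fin g → ℝ) : extd (0 : (Fin g → ℤ) →ₗ[ℤ] ℤ) x = 0 := by simp [extd]

lemma pi_decomp (x : Fin g → ℝ) : x = ∑ i, x i • (Pi.single i (1:ℝ) : Fin g → ℝ) := by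
  conv_lhs => rw [← Finset.univ_sum_single x]
  refine Finset.sum_congr rfl fun i _ => ?_
  funext j; by_cases h : j = i <;> simp [Pi.single_apply, h]

lemma Bb_expand1 (x y : Fin g → ℝ) :
    Bb x y = ∑ i, x i * Bb ((Pi.single i (1:ℝ) : Fin g → ℝ)) y := by
  conv_lhs => rw [pi_decomp x]
  rw [map_sum, LinearMap.sum_apply]
  exact Finset.sum_congr rfl fun i _ => by rw [map_smul, LinearMap.smul_apply, smul_eq_mul]

lemma Bb_expand2 (x y : Fin g → ℝ) :
    Bb x y = ∑ i, ∑ j, x i * y j * Bb ((Pi.single i (1:ℝ) : Fin g → ℝ)) ((Pi.single j (1:ℝ) : Fin g → ℝ)) := by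
  rw [Bb_expand1]
  refine Finset.sum_congr rfl fun i _ => ?_
  have : Bb ((Pi.single i (1:ℝ) : Fin g → ℝ)) y = ∑ j, y j * Bb ((Pi.single i (1:ℝ) : Fin g → ℝ)) ((Pi.single j (1:ℝ) : Fin g → ℝ)) := by
    conv_lhs => rw [pi_decomp y]
    rw [map_sum]
    exact Finset.sum_congr rfl fun j _ => by rw [map_smul, smul_eq_mul]
  rw [this, Finset.mul_sum]
  exact Finset.sum_congr rfl fun j _ => by ring

/-- `N · extd w p = B̄(ιφw, p)`. -/
lemma extd_Bb (hBbcompat : ∀ (y : Y) (x : Fin g → ℤ),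
      Bb (iota (y : Fin g → ℤ)) (iota x) = (B y x : ℝ))
    (hφ : ∀ u : (Fin g → ℤ) →ₗ[ℤ] ℤ, B (φ u) = (N : ℤ) • u)
    (w : (Fin g → ℤ) →ₗ[ℤ] ℤ) (p : Fin g → ℝ) :
    Bb (iota ((φ w : Y) : Fin g → ℤ)) p = (N : ℝ) * extd w p := by
  have hsingle : ∀ i, Bb (iota ((φ w : Y) : Fin g → ℤ)) ((Pi.single i (1:ℝ) : Fin g → ℝ))
      = (N : ℝ) * (w (Pi.single i 1) : ℝ) := by
    intro i
    rw [← iota_single, hBbcompat, hφ]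
    simp
  conv_lhs => rw [pi_decomp p]
  rw [map_sum]
  rw [extd, Finset.mul_sum]
  refine Finset.sum_congr rfl fun i _ => ?_
  rw [map_smul, smul_eq_mul, hsingle]
  ring

lemma Bb_nonneg (hBbpos : ∀ x : Fin g → ℝ, x ≠ 0 → 0 < Bb x x) (x : Fin g → ℝ) :
    0 ≤ Bb x x := by
  by_cases h : x = 0
  · subst h; simp
  · exact (hBbpos x h).le

/-- Cauchy–Schwarz for `Bb`. -/
lemma Bb_cauchy (hBbsymm : ∀ x y : Fin g → ℝ, Bb x y = Bb y x)
    (hBbpos : ∀ x : Fin g → ℝ, x ≠ 0 → 0 < Bb x x) (x y : Fin g → ℝ) :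
    Bb x y ≤ Real.sqrt (Bb x x) * Real.sqrt (Bb y y) := by
  have hsq : (Bb x y)^2 ≤ Bb x x * Bb y y := by
    by_cases hy : y = 0
    · subst hy; simp
    · have hyy : 0 < Bb y y := hBbpos y hy
      have h0 : 0 ≤ Bb (x - (Bb x y / Bb y y) • y) (x - (Bb x y / Bb y y) • y) :=
        Bb_nonneg hBbpos _
      simp only [map_sub, map_smul, LinearMap.sub_apply, LinearMap.smul_apply,
        smul_eq_mul] at h0
      have hxy := hBbsymm y x
      rw [hxy] at h0
      have h6 := mul_nonneg h0 hyy.le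
      rw [show (Bb x x - Bb x y / Bb y y * Bb x y
            - Bb x y / Bb y y * (Bb x y - Bb x y / Bb y y * Bb y y)) * Bb y y
          = Bb x x * Bb y y - (Bb x y)^2 from by field_simp; ring] at h6
      linarith
  calc Bb x y ≤ |Bb x y| := le_abs_self _
    _ = Real.sqrt ((Bb x y)^2) := (Real.sqrt_sq_eq_abs _).symm
    _ ≤ Real.sqrt (Bb x x * Bb y y) := Real.sqrt_le_sqrt hsq
    _ = Real.sqrt (Bb x x) * Real.sqrt (Bb y y) :=
        Real.sqrt_mul (Bb_nonneg hBbpos x) _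

/-- Positive-definiteness gives a uniform lower bound against the sup-norm. -/
lemma Bb_norm_lower (hg : 1 ≤ g) (hBbpos : ∀ x : Fin g → ℝ, x ≠ 0 → 0 < Bb x x) :
    ∃ c : ℝ, 0 < c ∧ ∀ y : Fin g → ℝ, c * ‖y‖^2 ≤ Bb y y := by
  have hcont : Continuous (fun y : Fin g → ℝ => Bb y y) := by
    have hexp : (fun y : Fin g → ℝ => Bb y y)
        = fun y => ∑ i, ∑ j, y i * y j * Bb ((Pi.single i (1:ℝ) : Fin g → ℝ)) ((Pi.single j (1:ℝ) : Fin g → ℝ)) := by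
      funext y; exact Bb_expand2 y y
    rw [hexp]
    refine continuous_finset_sum _ fun i _ => continuous_finset_sum _ fun j _ => ?_
    exact ((continuous_apply i).mul (continuous_apply j)).mul continuous_const
  haveI : Nonempty (Fin g) := ⟨⟨0, hg⟩⟩
  have hne : (Metric.sphere (0 : Fin g → ℝ) 1).Nonempty := by
    refine ⟨fun _ => 1, ?_⟩
    rw [Metric.mem_sphere, dist_zero_right]
    have := pi_norm_const (ι := Fin g) (1:ℝ)
    simpa using this
  obtain ⟨z₀, hz₀, hmin⟩ :=
    IsCompact.exists_isMinOn (isCompact_sphere (0 : Fin g → ℝ) 1) hne hcont.continuousOn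
  have hz₀norm : ‖z₀‖ = 1 := by
    rw [Metric.mem_sphere, dist_zero_right] at hz₀; exact hz₀
  have hz₀ne : z₀ ≠ 0 := by
    intro h; rw [h] at hz₀norm; simp at hz₀norm
  refine ⟨Bb z₀ z₀, hBbpos z₀ hz₀ne, fun y => ?_⟩
  by_cases hy : y = 0
  · subst hy; simp
  · have hn : 0 < ‖y‖ := norm_pos_iff.mpr hy
    set s := ‖y‖
    have hunit : ‖s⁻¹ • y‖ = 1 := by
      rw [norm_smul, norm_inv, norm_norm]
      field_simp
    have hmem : s⁻¹ • y ∈ Metric.sphere (0 : Fin g → ℝ) 1 := by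
      rw [Metric.mem_sphere, dist_zero_right]; exact hunit
    have h1 : Bb z₀ z₀ ≤ Bb (s⁻¹ • y) (s⁻¹ • y) := hmin hmem
    have h2 : Bb (s⁻¹ • y) (s⁻¹ • y) = s⁻¹ * s⁻¹ * Bb y y := by
      simp only [map_smul, LinearMap.smul_apply, smul_eq_mul]; ring
    rw [h2] at h1
    have hs2 : 0 < s^2 := by positivity
    calc Bb z₀ z₀ * ‖y‖^2 = Bb z₀ z₀ * s^2 := rfl
      _ ≤ (s⁻¹ * s⁻¹ * Bb y y) * s^2 := mul_le_mul_of_nonneg_right h1 hs2.le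
      _ = (s⁻¹*s)*(s⁻¹*s)* Bb y y := by ring
      _ = Bb y y := by rw [inv_mul_cancel₀ hn.ne']; ring

/-- Finiteness of integer points in a sup-norm ball. -/
lemma lattice_ball_finite (M : ℝ) : {ξ : Fin g → ℤ | ‖iota ξ‖ ≤ M}.Finite := by
  have hsub : {ξ : Fin g → ℤ | ‖iota ξ‖ ≤ M}
      ⊆ Set.Icc (fun _ => -⌈M⌉) (fun _ => ⌈M⌉) := by
    intro ξ hξ
    constructor <;> intro i
    · have h1 : |(ξ i : ℝ)| ≤ M := by
        have := norm_le_pi_norm (iota ξ) i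
        simp only [iota, Real.norm_eq_abs] at this
        exact this.trans hξ
      have h2 : (ξ i : ℝ) ≥ -⌈M⌉ := by
        have := abs_le.mp h1
        have hc : M ≤ (⌈M⌉ : ℝ) := Int.le_ceil M
        push_cast
        linarith [this.1]
      exact_mod_cast h2
    · have h1 : |(ξ i : ℝ)| ≤ M := by
        have := norm_le_pi_norm (iota ξ) i
        simp only [iota, Real.norm_eq_abs] at this
        exact this.trans hξ
      have h2 : (ξ i : ℝ) ≤ ⌈M⌉ := by
        have := abs_le.mp h1
        have hc : M ≤ (⌈M⌉ : ℝ) := Int.le_ceil M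
        linarith [this.2]
      exact_mod_cast h2
  exact (Set.finite_Icc _ _).subset hsub

/-- Finiteness of integer points in a `B̄`-ball. -/
lemma lattice_Bball_finite (hg : 1 ≤ g)
    (hBbpos : ∀ x : Fin g → ℝ, x ≠ 0 → 0 < Bb x x) (R : ℝ) :
    {ξ : Fin g → ℤ | Bb (iota ξ) (iota ξ) ≤ R}.Finite := by
  obtain ⟨c, hc, hcb⟩ := Bb_norm_lower hg hBbpos
  by_cases hR : 0 ≤ R
  · refine (lattice_ball_finite (Real.sqrt (R / c))).subset ?_
    intro ξ hξ
    simp only [Set.mem_setOf_eq] at hξ ⊢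
    have h1 : c * ‖iota ξ‖^2 ≤ R := (hcb (iota ξ)).trans hξ
    have h2 : ‖iota ξ‖^2 ≤ R / c := by
      rw [le_div_iff₀ hc]; linarith
    calc ‖iota ξ‖ = Real.sqrt (‖iota ξ‖^2) := by
          rw [Real.sqrt_sq (norm_nonneg _)]
      _ ≤ Real.sqrt (R / c) := Real.sqrt_le_sqrt h2
  · convert Set.finite_empty
    rw [Set.eq_empty_iff_forall_notMem]
    intro ξ hξ
    simp only [Set.mem_setOf_eq] at hξ
    have := Bb_nonneg hBbpos (iota ξ)
    linarith
end Analysis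
section Cells
set_option linter.unusedSectionVars false
set_option maxHeartbeats 1000000
variable {g : ℕ} {Y : Submodule ℤ (Fin g → ℤ)}
variable {B : Y →ₗ[ℤ] (Fin g → ℤ) →ₗ[ℤ] ℤ} {N : ℕ}
variable {φ : ((Fin g → ℤ) →ₗ[ℤ] ℤ) → Y}
variable {Bb : (Fin g → ℝ) →ₗ[ℝ] (Fin g → ℝ) →ₗ[ℝ] ℝ}

lemma iota_zero : iota (0 : Fin g → ℤ) = 0 := by funext i; simp [iota]

lemma extd_subvec (t : (Fin g → ℤ) →ₗ[ℤ] ℤ) (x y : Fin g → ℝ) :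
    extd t (x - y) = extd t x - extd t y := by
  rw [extd_eq_extdL, extd_eq_extdL, extd_eq_extdL, map_sub]

lemma extd_addvec (t : (Fin g → ℤ) →ₗ[ℤ] ℤ) (x y : Fin g → ℝ) :
    extd t (x + y) = extd t x + extd t y := by
  rw [extd_eq_extdL, extd_eq_extdL, extd_eq_extdL, map_add]

lemma extd_smulvec (t : (Fin g → ℤ) →ₗ[ℤ] ℤ) (c : ℝ) (x : Fin g → ℝ) :
    extd t (c • x) = c * extd t x := by
  rw [extd_eq_extdL, extd_eq_extdL, map_smul, smul_eq_mul]

variable (hBsymm : ∀ y z : Y, B y (z : Fin g → ℤ) = B z (y : Fin g → ℤ))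
  (hBpos : ∀ y : Y, y ≠ 0 → 0 < B y (y : Fin g → ℤ))
  (hNpos : 0 < N) (hφ : ∀ u : (Fin g → ℤ) →ₗ[ℤ] ℤ, B (φ u) = (N : ℤ) • u)
  (hBbsymm : ∀ x y : Fin g → ℝ, Bb x y = Bb y x)
  (hBbpos : ∀ x : Fin g → ℝ, x ≠ 0 → 0 < Bb x x)
  (hBbcompat : ∀ (y : Y) (x : Fin g → ℤ),
      Bb (iota (y : Fin g → ℤ)) (iota x) = (B y x : ℝ))

include hBsymm hBpos hNpos hφ in
lemma El_add (ℓ : ℕ) (w t : (Fin g → ℤ) →ₗ[ℤ] ℤ) :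
    El φ ℓ (w + t) = El φ ℓ w + El φ ℓ t + 2 * (ℓ:ℤ) * t ((φ w : Y) : Fin g → ℤ) := by
  have hs := pair_symm hBpos hNpos hφ hBsymm w t
  simp only [El, phi_add hBpos hNpos hφ, Submodule.coe_add, map_add, LinearMap.add_apply]
  linear_combination (ℓ:ℤ) * hs

include hBpos hNpos hφ hBbsymm hBbpos hBbcompat in
lemma mem_VorP_iff (ℓ : ℕ) (hℓ : 0 < ℓ) (x : Fin g → ℝ) :
    x ∈ VorP Bb φ ℓ 0 ↔ ∀ t : (Fin g → ℤ) →ₗ[ℤ] ℤ, extd t x ≤ (El φ ℓ t : ℝ) := by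
  have hzero : iota ((2 * (ℓ:ℤ)) • ((φ (0 : (Fin g → ℤ) →ₗ[ℤ] ℤ) : Y) : Fin g → ℤ)) = 0 := by
    rw [phi_zero hBpos hNpos hφ]
    simp [iota_zero]
  have hcomp : ∀ t : (Fin g → ℤ) →ₗ[ℤ] ℤ,
      Bb (x - iota ((2 * (ℓ:ℤ)) • ((φ t : Y) : Fin g → ℤ)))
         (x - iota ((2 * (ℓ:ℤ)) • ((φ t : Y) : Fin g → ℤ)))
      = Bb x x - 4*(ℓ:ℝ)*(N:ℝ)*extd t x
          + 4*(ℓ:ℝ)^2*(N:ℝ)*((t ((φ t : Y) : Fin g → ℤ) : ℤ) : ℝ) := by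
    intro t
    have hd : iota ((2 * (ℓ:ℤ)) • ((φ t : Y) : Fin g → ℤ))
        = ((2 * (ℓ:ℝ))) • iota ((φ t : Y) : Fin g → ℤ) := by
      rw [iota_zsmul]; push_cast; ring_nf
    rw [hd]
    simp only [map_sub, map_smul, LinearMap.sub_apply, LinearMap.smul_apply, smul_eq_mul]
    have h1 : Bb (iota ((φ t : Y) : Fin g → ℤ)) x = (N:ℝ) * extd t x :=
      extd_Bb hBbcompat hφ t x
    have h2 : Bb x (iota ((φ t : Y) : Fin g → ℤ)) = (N:ℝ) * extd t x := by
      rw [hBbsymm]; exact h1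
    have h3 : Bb (iota ((φ t : Y) : Fin g → ℤ)) (iota ((φ t : Y) : Fin g → ℤ))
        = (N:ℝ) * ((t ((φ t : Y) : Fin g → ℤ) : ℤ) : ℝ) := by
      rw [extd_Bb hBbcompat hφ t, extd_iota]
    rw [h1, h2, h3]
    ring
  constructor
  · intro hx t
    have h := hx t
    rw [show (0 : (Fin g → ℤ) →ₗ[ℤ] ℤ) = (0 : (Fin g → ℤ) →ₗ[ℤ] ℤ) from rfl] at h
    rw [hzero, sub_zero] at h
    have hle : Bb x x ≤ Bb (x - iota ((2 * (ℓ:ℤ)) • ((φ t : Y) : Fin g → ℤ)))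
         (x - iota ((2 * (ℓ:ℤ)) • ((φ t : Y) : Fin g → ℤ))) := by
      have h1 : Bb x x = (Real.sqrt (Bb x x))^2 := (Real.sq_sqrt (Bb_nonneg hBbpos x)).symm
      have h2 := Real.sq_sqrt (Bb_nonneg hBbpos (x - iota ((2 * (ℓ:ℤ)) • ((φ t : Y) : Fin g → ℤ))))
      rw [h1, ← h2]
      exact pow_le_pow_left₀ (Real.sqrt_nonneg _) h 2
    rw [hcomp t] at hle
    have hEl : (El φ ℓ t : ℝ) = (ℓ:ℝ) * ((t ((φ t : Y) : Fin g → ℤ) : ℤ) : ℝ) := by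
      simp only [El]; push_cast; ring
    rw [hEl]
    have hpos : (0:ℝ) < 4*(ℓ:ℝ)*(N:ℝ) := by positivity
    nlinarith [hle]
  · intro hx t
    have hle : Bb x x ≤ Bb (x - iota ((2 * (ℓ:ℤ)) • ((φ t : Y) : Fin g → ℤ)))
         (x - iota ((2 * (ℓ:ℤ)) • ((φ t : Y) : Fin g → ℤ))) := by
      rw [hcomp t]
      have h := hx t
      have hEl : (El φ ℓ t : ℝ) = (ℓ:ℝ) * ((t ((φ t : Y) : Fin g → ℤ) : ℤ) : ℝ) := by
        simp only [El]; push_cast; ring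
      rw [hEl] at h
      have hpos : (0:ℝ) < 4*(ℓ:ℝ)*(N:ℝ) := by positivity
      nlinarith [h]
    rw [hzero, sub_zero]
    exact Real.sqrt_le_sqrt hle

include hBpos hNpos hφ hBsymm in
lemma lattice_mem_sigma (ℓ : ℕ) (ξ : Fin g → ℤ)
    (h : ∀ t : (Fin g → ℤ) →ₗ[ℤ] ℤ, extd t (iota ξ) ≤ (El φ ℓ t : ℝ)) :
    ξ ∈ SigmaL φ ℓ := by
  intro t
  have h1 := h (-t)
  rw [extd_negfun, extd_iota, El_neg hBsymm hBpos hNpos hφ] at h1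
  have h2 : (-(t ξ) : ℝ) ≤ (El φ ℓ t : ℝ) := by exact_mod_cast h1
  have h3 : -(t ξ) ≤ El φ ℓ t := by exact_mod_cast h2
  omega

include hBpos hNpos hφ hBsymm in
lemma sigma_mem_vorp (ℓ : ℕ) (ξ : Fin g → ℤ) (hξ : ξ ∈ SigmaL φ ℓ) :
    ∀ t : (Fin g → ℤ) →ₗ[ℤ] ℤ, extd t (iota ξ) ≤ (El φ ℓ t : ℝ) := by
  intro t
  rw [extd_iota]
  have h1 := hξ (-t)
  rw [El_neg hBsymm hBpos hNpos hφ, LinearMap.neg_apply] at h1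
  exact_mod_cast (by omega : t ξ ≤ El φ ℓ t)

include hBsymm hBpos hNpos hφ hBbsymm hBbpos hBbcompat in
lemma exists_cell (hg : 1 ≤ g) (ℓ : ℕ) (hℓ : 0 < ℓ) (p : Fin g → ℝ) :
    ∃ w : (Fin g → ℤ) →ₗ[ℤ] ℤ, ∀ t : (Fin g → ℤ) →ₗ[ℤ] ℤ,
      extd t p ≤ (El φ ℓ t : ℝ) + 2*(ℓ:ℝ)*((t ((φ w : Y) : Fin g → ℤ) : ℤ) : ℝ) := by
  classical
  set F : ((Fin g → ℤ) →ₗ[ℤ] ℤ) → ℝ := fun w => extd w p - (El φ ℓ w : ℝ) with hF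
  set A : Set ((Fin g → ℤ) →ₗ[ℤ] ℤ) := {w | 0 ≤ F w} with hA
  have h0A : (0 : (Fin g → ℤ) →ₗ[ℤ] ℤ) ∈ A := by
    simp only [hA, hF, Set.mem_setOf_eq, extd_zerofun, El_zero]
    norm_num
  -- A is finite
  have hAfin : A.Finite := by
    have hsub : A ⊆ (fun w : (Fin g → ℤ) →ₗ[ℤ] ℤ => ((φ w : Y) : Fin g → ℤ)) ⁻¹'
        {ξ : Fin g → ℤ | Bb (iota ξ) (iota ξ) ≤ Bb p p} := by
      intro w hw
      simp only [Set.mem_preimage, Set.mem_setOf_eq]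
      set a := Real.sqrt (Bb (iota ((φ w : Y) : Fin g → ℤ)) (iota ((φ w : Y) : Fin g → ℤ)))
        with ha
      set b := Real.sqrt (Bb p p) with hb
      have haa : Bb (iota ((φ w : Y) : Fin g → ℤ)) (iota ((φ w : Y) : Fin g → ℤ)) = a^2 :=
        (Real.sq_sqrt (Bb_nonneg hBbpos _)).symm
      have hbb : Bb p p = b^2 := (Real.sq_sqrt (Bb_nonneg hBbpos _)).symm
      have hcs : Bb (iota ((φ w : Y) : Fin g → ℤ)) p ≤ a * b := by
        rw [ha, hb]
        exact Bb_cauchy hBbsymm hBbpos _ _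
      have hBext := extd_Bb hBbcompat hφ w p
      have hElw : (N:ℝ) * (El φ ℓ w : ℝ) = (ℓ:ℝ) * a^2 := by
        rw [← haa, extd_Bb hBbcompat hφ w, extd_iota]
        simp only [El]
        push_cast
        ring
      have hwA : (El φ ℓ w : ℝ) ≤ extd w p := by
        simp only [hA, hF, Set.mem_setOf_eq] at hw
        linarith
      have hineq : (ℓ:ℝ) * a^2 ≤ a * b := by
        calc (ℓ:ℝ) * a^2 = (N:ℝ) * (El φ ℓ w : ℝ) := hElw.symm
          _ ≤ (N:ℝ) * extd w p := by
              have : (0:ℝ) ≤ N := Nat.cast_nonneg N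
              nlinarith [hwA]
          _ = Bb (iota ((φ w : Y) : Fin g → ℤ)) p := hBext.symm
          _ ≤ a * b := hcs
      rw [haa, hbb]
      have hanneg : 0 ≤ a := Real.sqrt_nonneg _
      have hbnneg : 0 ≤ b := Real.sqrt_nonneg _
      rcases eq_or_lt_of_le hanneg with h | h
      · rw [← h]; simpa using sq_nonneg b
      · have hl1 : (1:ℝ) ≤ (ℓ:ℝ) := by exact_mod_cast hℓ
        have : a ≤ b := by
          have h2 : (ℓ:ℝ) * a ≤ b := by
            have := (mul_le_mul_iff_of_pos_right h).mp (by nlinarith [hineq] : (ℓ:ℝ) * a * a ≤ b * a)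
            linarith [this]
          nlinarith [h2, hl1, h.le]
        nlinarith [this, hanneg]
    refine ((lattice_Bball_finite hg hBbpos (Bb p p)).preimage ?_).subset hsub
    intro w1 _ w2 _ h
    exact phi_inj hBpos hNpos hφ (Subtype.coe_injective h)
  obtain ⟨w, hwA, hwmax⟩ := Set.exists_max_image A F hAfin ⟨0, h0A⟩
  refine ⟨w, fun t => ?_⟩
  have hFle : F (w + t) ≤ F w := by
    by_cases h : w + t ∈ A
    · exact hwmax _ h
    · simp only [hA, Set.mem_setOf_eq, not_le] at h
      have : 0 ≤ F w := hwA
      linarith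
  have hexp : F (w + t) = F w + extd t p - (El φ ℓ t : ℝ)
      - 2*(ℓ:ℝ)*((t ((φ w : Y) : Fin g → ℤ) : ℤ) : ℝ) := by
    simp only [hF, extd_addfun, El_add hBsymm hBpos hNpos hφ ℓ w t]
    push_cast
    ring
  rw [hexp] at hFle
  linarith
end Cells
section Covering
set_option linter.unusedSectionVars false
set_option maxHeartbeats 1000000
variable {g : ℕ} {Y : Submodule ℤ (Fin g → ℤ)}
variable {B : Y →ₗ[ℤ] (Fin g → ℤ) →ₗ[ℤ] ℤ} {N : ℕ}
variable {φ : ((Fin g → ℤ) →ₗ[ℤ] ℤ) → Y}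
variable {Bb : (Fin g → ℝ) →ₗ[ℝ] (Fin g → ℝ) →ₗ[ℝ] ℝ}
variable (hBsymm : ∀ y z : Y, B y (z : Fin g → ℤ) = B z (y : Fin g → ℤ))
  (hBpos : ∀ y : Y, y ≠ 0 → 0 < B y (y : Fin g → ℤ))
  (hNpos : 0 < N) (hφ : ∀ u : (Fin g → ℤ) →ₗ[ℤ] ℤ, B (φ u) = (N : ℤ) • u)
  (hBbsymm : ∀ x y : Fin g → ℝ, Bb x y = Bb y x)
  (hBbpos : ∀ x : Fin g → ℝ, x ≠ 0 → 0 < Bb x x)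
  (hBbcompat : ∀ (y : Y) (x : Fin g → ℤ),
      Bb (iota (y : Fin g → ℤ)) (iota x) = (B y x : ℝ))

include hBsymm hBpos hNpos hφ hBbsymm hBbpos hBbcompat in
lemma covering (hg : 1 ≤ g) (ℓ : ℕ) (hℓ : 0 < ℓ)
    (hint : IsIntegral (VorP Bb φ ℓ 0))
    (α : Fin g → ℤ) (u : (Fin g → ℤ) →ₗ[ℤ] ℤ) (x : Fin g → ℝ) :
    ∃ (vβ : (Fin g → ℤ) →ₗ[ℤ] ℤ) (β : Fin g → ℤ),
      β = α - (2 * (ℓ:ℤ)) • ((φ vβ : Y) : Fin g → ℤ) ∧ β ∈ SigmaL φ ℓ ∧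
      x ∈ coneC φ ℓ β := by
  classical
  set ζ : Fin g → ℝ := iota (α + (2 * (ℓ:ℤ)) • ((φ u : Y) : Fin g → ℤ)) with hζ
  set Cell : ((Fin g → ℤ) →ₗ[ℤ] ℤ) → (Fin g → ℝ) → Prop := fun w p =>
    ∀ t : (Fin g → ℤ) →ₗ[ℤ] ℤ,
      extd t p ≤ (El φ ℓ t : ℝ) + 2*(ℓ:ℝ)*((t ((φ w : Y) : Fin g → ℤ) : ℤ) : ℝ) with hCell
  have cell_vorp : ∀ w p, Cell w p →
      (p - iota ((2 * (ℓ:ℤ)) • ((φ w : Y) : Fin g → ℤ))) ∈ VorP Bb φ ℓ 0 := by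
    intro w p hc
    rw [mem_VorP_iff hBpos hNpos hφ hBbsymm hBbpos hBbcompat ℓ hℓ]
    intro t
    rw [extd_subvec, extd_iota]
    have h1 := hc t
    have hcast : ((t ((2 * (ℓ:ℤ)) • ((φ w : Y) : Fin g → ℤ)) : ℤ) : ℝ)
        = 2*(ℓ:ℝ)*((t ((φ w : Y) : Fin g → ℤ) : ℤ) : ℝ) := by
      rw [map_smul, smul_eq_mul]; push_cast; ring
    linarith [h1, hcast.le, hcast.ge]
  have exC : ∀ p, ∃ w, Cell w p := fun p =>
    exists_cell hBsymm hBpos hNpos hφ hBbsymm hBbpos hBbcompat hg ℓ hℓ p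
  obtain ⟨R, hR⟩ := isBounded_iff_forall_norm_le.mp (by exact hint.1 : Bornology.IsBounded (VorP Bb φ ℓ 0))
  set W : Set ((Fin g → ℤ) →ₗ[ℤ] ℤ) := {w | ∃ t : ℝ, 0 < t ∧ t ≤ 1 ∧ Cell w (ζ + t • x)}
    with hW
  have hWfin : W.Finite := by
    have hsub : W ⊆ (fun w : (Fin g → ℤ) →ₗ[ℤ] ℤ => (2 * (ℓ:ℤ)) • ((φ w : Y) : Fin g → ℤ))
        ⁻¹' {ξ : Fin g → ℤ | ‖iota ξ‖ ≤ ‖ζ‖ + ‖x‖ + R} := by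
      rintro w ⟨t, ht0, ht1, hc⟩
      simp only [Set.mem_preimage, Set.mem_setOf_eq]
      have hq := cell_vorp w _ hc
      have hqn := hR _ hq
      have hid : iota ((2 * (ℓ:ℤ)) • ((φ w : Y) : Fin g → ℤ))
          = (ζ + t • x) - ((ζ + t • x) - iota ((2 * (ℓ:ℤ)) • ((φ w : Y) : Fin g → ℤ))) := by
        abel
      rw [hid]
      calc ‖(ζ + t • x) - ((ζ + t • x) - iota ((2 * (ℓ:ℤ)) • ((φ w : Y) : Fin g → ℤ)))‖
          ≤ ‖ζ + t • x‖ + ‖(ζ + t • x) - iota ((2 * (ℓ:ℤ)) • ((φ w : Y) : Fin g → ℤ))‖ :=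
            norm_sub_le _ _
        _ ≤ (‖ζ‖ + ‖t • x‖) + R := add_le_add (norm_add_le _ _) hqn
        _ ≤ (‖ζ‖ + ‖x‖) + R := by
            have : ‖t • x‖ = t * ‖x‖ := by
              rw [norm_smul, Real.norm_eq_abs, abs_of_pos ht0]
            have h2 : t * ‖x‖ ≤ 1 * ‖x‖ :=
              mul_le_mul_of_nonneg_right ht1 (norm_nonneg x)
            rw [this]
            linarith [h2]
    have hinj : Set.InjOn (fun w : (Fin g → ℤ) →ₗ[ℤ] ℤ =>
        (2 * (ℓ:ℤ)) • ((φ w : Y) : Fin g → ℤ))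
        ((fun w : (Fin g → ℤ) →ₗ[ℤ] ℤ => (2 * (ℓ:ℤ)) • ((φ w : Y) : Fin g → ℤ))
          ⁻¹' {ξ : Fin g → ℤ | ‖iota ξ‖ ≤ ‖ζ‖ + ‖x‖ + R}) := by
      intro w1 _ w2 _ h
      simp only at h
      have h2 : ((φ w1 : Y) : Fin g → ℤ) = ((φ w2 : Y) : Fin g → ℤ) := by
        have hne : (2 * (ℓ:ℤ)) ≠ 0 := by omega
        exact smul_right_injective (Fin g → ℤ) hne h
      exact phi_inj hBpos hNpos hφ (Subtype.coe_injective h2)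
    exact ((lattice_ball_finite _).preimage hinj).subset hsub
  have hseq : ∀ n : ℕ, ∃ w, Cell w (ζ + (1/((n:ℝ)+1)) • x) := fun n => exC _
  choose wf hwf using hseq
  have htn : ∀ n : ℕ, 0 < 1/((n:ℝ)+1) ∧ 1/((n:ℝ)+1) ≤ 1 := by
    intro n
    constructor
    · positivity
    · rw [div_le_one (by positivity)]
      have : (0:ℝ) ≤ (n:ℝ) := Nat.cast_nonneg n
      linarith
  have hwfW : ∀ n, wf n ∈ W := fun n => ⟨1/((n:ℝ)+1), (htn n).1, (htn n).2, hwf n⟩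
  have hfiber : ∃ w₀ ∈ W, {n : ℕ | wf n = w₀}.Infinite := by
    by_contra hcon
    push_neg at hcon
    have huniv : (Set.univ : Set ℕ) ⊆ ⋃ w₀ ∈ W, {n | wf n = w₀} := by
      intro n _
      exact Set.mem_biUnion (hwfW n) rfl
    have : (Set.univ : Set ℕ).Finite :=
      (hWfin.biUnion fun w hw => hcon w hw).subset huniv
    exact Set.infinite_univ this
  obtain ⟨w₀, hw₀W, hinf⟩ := hfiber
  have hsmall : ∀ ε : ℝ, 0 < ε → ∃ t : ℝ, 0 < t ∧ t ≤ ε ∧ t ≤ 1 ∧ Cell w₀ (ζ + t • x) := by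
    intro ε hε
    obtain ⟨n, hn, hngt⟩ := hinf.exists_gt ⌈1/ε⌉₊
    refine ⟨1/((n:ℝ)+1), (htn n).1, ?_, (htn n).2, ?_⟩
    · rw [div_le_iff₀ (by positivity)]
      have h1 : 1/ε ≤ (⌈1/ε⌉₊ : ℝ) := Nat.le_ceil _
      have h2 : ((⌈1/ε⌉₊ : ℕ) : ℝ) ≤ (n:ℝ) := by exact_mod_cast hngt.le
      have h3 : 1/ε ≤ (n:ℝ) + 1 := by linarith
      calc (1:ℝ) = ε * (1/ε) := by field_simp
        _ ≤ ε * ((n:ℝ)+1) := mul_le_mul_of_nonneg_left h3 hε.le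
    · have : wf n = w₀ := hn
      rw [← this]
      exact hwf n
  have hζcell : Cell w₀ ζ := by
    intro t'
    by_contra hlt
    push_neg at hlt
    set C := (El φ ℓ t' : ℝ) + 2*(ℓ:ℝ)*((t' ((φ w₀ : Y) : Fin g → ℤ) : ℤ) : ℝ) with hC
    set δ := extd t' ζ - C with hδ
    have hδpos : 0 < δ := by rw [hδ]; linarith [hlt]
    set e := |extd t' x| with he
    obtain ⟨t, ht0, htε, _, hc⟩ := hsmall (δ/(e+1)) (by positivity)
    have h1 := hc t'
    rw [extd_addvec, extd_smulvec] at h1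
    have h2 : -(t * e) ≤ t * extd t' x := by
      have := neg_abs_le (extd t' x)
      calc -(t * e) = t * (-e) := by ring
        _ ≤ t * extd t' x := mul_le_mul_of_nonneg_left (by rw [he]; exact this) ht0.le
    have h3 : t * e ≤ (δ/(e+1)) * e :=
      mul_le_mul_of_nonneg_right htε (by rw [he]; exact abs_nonneg _)
    have h4 : (δ/(e+1)) * e < δ := by
      rw [div_mul_eq_mul_div, div_lt_iff₀ (by positivity)]
      have he0 : 0 ≤ e := by rw [he]; exact abs_nonneg _
      nlinarith [hδpos, he0]
    linarith
  obtain ⟨t₀, ht₀0, _, ht₀1, hc₀⟩ := hsmall 1 one_pos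
  set vβ : (Fin g → ℤ) →ₗ[ℤ] ℤ := w₀ - u with hvβ
  set β : Fin g → ℤ := α - (2 * (ℓ:ℤ)) • ((φ vβ : Y) : Fin g → ℤ) with hβdef
  have hβι : iota β = ζ - iota ((2 * (ℓ:ℤ)) • ((φ w₀ : Y) : Fin g → ℤ)) := by
    rw [hβdef, hζ, ← iota_sub]
    congr 1
    rw [hvβ, phi_sub hBpos hNpos hφ, AddSubgroupClass.coe_sub, smul_sub]
    abel
  have hbSig : β ∈ SigmaL φ ℓ := by
    apply lattice_mem_sigma hBsymm hBpos hNpos hφ ℓ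
    intro t
    have hq := cell_vorp w₀ ζ hζcell
    have h2 := (mem_VorP_iff hBpos hNpos hφ hBbsymm hBbpos hBbcompat ℓ hℓ _).mp hq t
    rw [hβι]
    exact h2
  refine ⟨vβ, β, hβdef, hbSig, ?_⟩
  -- the cone membership
  have hq₀ : (ζ + t₀ • x) - iota ((2 * (ℓ:ℤ)) • ((φ w₀ : Y) : Fin g → ℤ)) ∈ VorP Bb φ ℓ 0 :=
    cell_vorp w₀ _ hc₀
  set q : Fin g → ℝ := (ζ + t₀ • x) - iota ((2 * (ℓ:ℤ)) • ((φ w₀ : Y) : Fin g → ℤ)) with hqdef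
  have hxq : x = t₀⁻¹ • (q - iota β) := by
    have hdiff : q - iota β = t₀ • x := by
      rw [hqdef, hβι]
      abel
    rw [hdiff, smul_smul, inv_mul_cancel₀ ht₀0.ne', one_smul]
  have hull := hint.2.1
  rw [hull, _root_.convexHull_eq] at hq₀
  obtain ⟨ι', tset, wt, zf, hw0, hw1, hzmem, hcm⟩ := hq₀
  rw [Finset.centerMass_eq_of_sum_1 _ _ hw1] at hcm
  have hγch : ∀ i : {i // i ∈ tset}, ∃ γ', γ' ∈ SigmaL φ ℓ ∧ zf (i : ι') = iota γ' := by
    rintro ⟨i, hi⟩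
    obtain ⟨hv, ξ, hξ⟩ := hzmem i hi
    refine ⟨ξ, ?_, hξ.symm⟩
    apply lattice_mem_sigma hBsymm hBpos hNpos hφ ℓ
    intro t
    have h3 := (mem_VorP_iff hBpos hNpos hφ hBbsymm hBbpos hBbcompat ℓ hℓ _).mp hv t
    rw [hξ]
    exact h3
  choose γs hγsm hγse using hγch
  refine ⟨tset.card, fun k => t₀⁻¹ * wt ((tset.equivFin.symm k : {i // i ∈ tset}) : ι'),
    fun k => iota (γs (tset.equivFin.symm k) - β), ?_, ?_, ?_⟩
  · intro k
    exact mul_nonneg (inv_nonneg.mpr ht₀0.le) (hw0 _ (tset.equivFin.symm k).2)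
  · intro k
    exact ⟨γs _, hγsm _, rfl⟩
  · have hsplit : q - iota β = ∑ i ∈ tset, wt i • (zf i - iota β) := by
      calc q - iota β = (∑ i ∈ tset, wt i • zf i) - (∑ i ∈ tset, wt i) • iota β := by
            rw [hcm, hw1, one_smul]
        _ = ∑ i ∈ tset, (wt i • zf i - wt i • iota β) := by
            rw [Finset.sum_smul, ← Finset.sum_sub_distrib]
        _ = ∑ i ∈ tset, wt i • (zf i - iota β) :=
            Finset.sum_congr rfl fun i _ => (smul_sub _ _ _).symm
    calc x = t₀⁻¹ • (q - iota β) := hxq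
      _ = ∑ i ∈ tset, t₀⁻¹ • (wt i • (zf i - iota β)) := by
          rw [hsplit, Finset.smul_sum]
      _ = ∑ i : {i // i ∈ tset}, t₀⁻¹ • (wt (i : ι') • (zf (i : ι') - iota β)) :=
          (Finset.sum_coe_sort tset _).symm
      _ = ∑ k : Fin tset.card, (t₀⁻¹ * wt ((tset.equivFin.symm k : {i // i ∈ tset}) : ι')) •
            iota (γs (tset.equivFin.symm k) - β) := by
          refine Fintype.sum_equiv tset.equivFin _ _ fun i => ?_
          rw [Equiv.symm_apply_apply, hγse i, smul_smul, iota_sub (γs i) β]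
end Covering
/-- description of the cone `K ⊆ ℝ × X_ℝ` generated by `(1,0)` and the
elements `(E_ℓ(v) + v(γ) − E_ℓ(u) − u(α), γ − α + 2ℓφ(v − u))`, `γ ∈ Σ_ℓ`, `v ∈ X^∨`. -/
theorem statement15
    (g : ℕ) (hg : 1 ≤ g)
    (Y : Submodule ℤ (Fin g → ℤ))
    (hYfin : Y.toAddSubgroup.index ≠ 0)
    (B : Y →ₗ[ℤ] (Fin g → ℤ) →ₗ[ℤ] ℤ)
    (hBsymm : ∀ y z : Y, B y (z : Fin g → ℤ) = B z (y : Fin g → ℤ))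
    (hBpos : ∀ y : Y, y ≠ 0 → 0 < B y (y : Fin g → ℤ))
    (N : ℕ) (hN : N = (LinearMap.range B).toAddSubgroup.index) (hNpos : 0 < N)
    (φ : ((Fin g → ℤ) →ₗ[ℤ] ℤ) → Y)
    (hφ : ∀ u : (Fin g → ℤ) →ₗ[ℤ] ℤ, B (φ u) = (N : ℤ) • u)
    (Bb : (Fin g → ℝ) →ₗ[ℝ] (Fin g → ℝ) →ₗ[ℝ] ℝ)
    (hBbsymm : ∀ x y : Fin g → ℝ, Bb x y = Bb y x)
    (hBbpos : ∀ x : Fin g → ℝ, x ≠ 0 → 0 < Bb x x)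
    (hBbcompat : ∀ (y : Y) (x : Fin g → ℤ), Bb (iota (y : Fin g → ℤ)) (iota x) = (B y x : ℝ))
    (ℓ : ℕ) (hℓ : 0 < ℓ)
    (hint : IsIntegral (VorP Bb φ ℓ 0))
    (α : Fin g → ℤ) (hα : α ∈ SigmaL φ ℓ)
    (u : (Fin g → ℤ) →ₗ[ℤ] ℤ)
    (K : Set (ℝ × (Fin g → ℝ)))
    (hK : K = conicHull (insert ((1 : ℝ), (0 : Fin g → ℝ))
      {p : ℝ × (Fin g → ℝ) | ∃ γ ∈ SigmaL φ ℓ, ∃ v : (Fin g → ℤ) →ₗ[ℤ] ℤ,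
        p = (((El φ ℓ v + v γ - El φ ℓ u - u α : ℤ) : ℝ),
             iota (γ - α + (2 * (ℓ : ℤ)) • ((φ (v - u) : Fin g → ℤ))))})) :
    (∀ (x₀ : ℝ) (x : Fin g → ℝ),
      (x₀, x) ∈ K ↔ ∃ β ∈ SigmaAlpha φ ℓ α, ∃ vβ : (Fin g → ℤ) →ₗ[ℤ] ℤ,
        β = α - (2 * (ℓ : ℤ)) • ((φ vβ : Fin g → ℤ)) ∧
        x ∈ coneC φ ℓ β ∧ extd vβ x + extd u x ≤ x₀) ∧
    (∀ (x₀ : ℝ) (x : Fin g → ℝ), (x₀, x) ∈ K →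
      extd u x ≤ x₀ ∧ (x₀ = extd u x ↔ x ∈ coneC φ ℓ α ∧ x₀ = extd u x)) := by
  have hKK : K = conicHull (Kgen φ ℓ α u) := hK
  constructor
  · intro x₀ x
    constructor
    · intro hx
      rw [hKK] at hx
      obtain ⟨vβ, β, hβdef, hbS, hcone⟩ :=
        covering hBsymm hBpos hNpos hφ hBbsymm hBbpos hBbcompat hg ℓ hℓ hint α u x
      refine ⟨β, ⟨hbS, ⟨-vβ, ?_⟩⟩, vβ, hβdef, hcone, ?_⟩
      · rw [hβdef, phi_neg hBpos hNpos hφ]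
        rw [show ((-(φ vβ) : Y) : Fin g → ℤ) = -((φ vβ : Y) : Fin g → ℤ) from rfl]
        rw [smul_neg, sub_eq_add_neg]
      · have hb := K_bound hBsymm hBpos hNpos hφ ℓ α u vβ hα (hβdef ▸ hbS) hx
        rw [extd_addfun] at hb
        linarith
    · rintro ⟨β, ⟨hbS, _⟩, vβ, hβdef, hcone, hineq⟩
      rw [hKK]
      exact K_rev hBsymm hBpos hNpos hφ ℓ α u vβ β hα hbS hβdef hcone hineq
  · intro x₀ x hx
    rw [hKK] at hx
    have h0 : α - (2 * (ℓ:ℤ)) • ((φ (0 : (Fin g → ℤ) →ₗ[ℤ] ℤ) : Y) : Fin g → ℤ)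
        ∈ SigmaL φ ℓ := by
      rw [phi_zero hBpos hNpos hφ]
      simpa using hα
    have hb := K_bound hBsymm hBpos hNpos hφ ℓ α u 0 hα h0 hx
    rw [add_zero] at hb
    refine ⟨hb, ?_, fun h => h.2⟩
    intro heq
    exact ⟨K_eq_case hBsymm hBpos hNpos hφ ℓ α u hα hx heq, heq⟩
end NFC
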